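/- Let n ≥ 1, let H̃ ∈ T_{A,n}, and let α > 0 and β > 0. If two spring-mass systems with positive masses and positive spring constants both have associated matrix H̃ and both satisfy K_1/√(m_1) = α and K_{n+1}/√(m_n) = β, then they have identical masses (m_1,…,m_n) and identical spring constants (K_1,…,K_{n+1}). -/

import Mathlib

open Matrix

/-- The stiffness matrix of a spring-mass system with spring constants `K 0, …, K n`
(`n × n`, tridiagonal, with `B j j = K j + K (j+1)` and off-diagonal entries `-K (j+1)`). -/
noncomputable def stiffB (n : ℕ) (K : Fin (n + 1) → ℝ) : Matrix (Fin n) (Fin n) ℝ :=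
  Matrix.of fun i j =>
    if (i : ℕ) = (j : ℕ) then K i.castSucc + K i.succ
    else if (i : ℕ) + 1 = (j : ℕ) then -K i.succ
    else if (j : ℕ) + 1 = (i : ℕ) then -K j.succ
    else 0

/-- The associated matrix `H = M^{-1/2} B M^{-1/2}` of a spring-mass system with
masses `m` and spring constants `K`. -/
noncomputable def assocH (n : ℕ) (m : Fin n → ℝ) (K : Fin (n + 1) → ℝ) :
    Matrix (Fin n) (Fin n) ℝ :=
  Matrix.diagonal (fun i => (Real.sqrt (m i))⁻¹) * stiffB n K *
    Matrix.diagonal (fun i => (Real.sqrt (m i))⁻¹)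

/-- A matrix is tridiagonal: entries vanish when the indices differ by more than one. -/
def IsTridiagonal {n : ℕ} (H : Matrix (Fin n) (Fin n) ℝ) : Prop :=
  ∀ i j : Fin n, ((i : ℕ) + 1 < (j : ℕ) ∨ (j : ℕ) + 1 < (i : ℕ)) → H i j = 0

/-- The set `T_{A,n}`: real symmetric tridiagonal matrices with negative sub- and
super-diagonal entries which are positive definite. -/
def MemTA {n : ℕ} (H : Matrix (Fin n) (Fin n) ℝ) : Prop :=
  H.IsSymm ∧ IsTridiagonal H ∧
    (∀ i j : Fin n, ((i : ℕ) + 1 = (j : ℕ) ∨ (j : ℕ) + 1 = (i : ℕ)) → H i j < 0) ∧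
    H.PosDef

set_option maxHeartbeats 1000000 in
private lemma spring_mass_aux
    (n : ℕ) (hn : 1 ≤ n)
    (m m' : Fin n → ℝ) (K K' : Fin (n + 1) → ℝ)
    (hm : ∀ i, 0 < m i) (hK : ∀ j, 0 < K j)
    (hm' : ∀ i, 0 < m' i) (hK' : ∀ j, 0 < K' j)
    (hH : assocH n m K = assocH n m' K')
    (hα1 : K 0 / Real.sqrt (m ⟨0, lt_of_lt_of_le Nat.zero_lt_one hn⟩) = K' 0 / Real.sqrt (m' ⟨0, lt_of_lt_of_le Nat.zero_lt_one hn⟩))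
    (hβ1 : K (Fin.last n) / Real.sqrt (m ⟨n - 1, Nat.sub_lt (lt_of_lt_of_le Nat.zero_lt_one hn) Nat.one_pos⟩)
         = K' (Fin.last n) / Real.sqrt (m' ⟨n - 1, Nat.sub_lt (lt_of_lt_of_le Nat.zero_lt_one hn) Nat.one_pos⟩)) :
    m = m' ∧ K = K' := by
  -- square roots
  set a : Fin n → ℝ := fun i => Real.sqrt (m i) with ha
  set a' : Fin n → ℝ := fun i => Real.sqrt (m' i) with ha'
  have hap : ∀ i, 0 < a i := fun i => Real.sqrt_pos.2 (hm i)
  have hap' : ∀ i, 0 < a' i := fun i => Real.sqrt_pos.2 (hm' i)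
  -- entrywise equality
  have hEq : ∀ i j : Fin n,
      (a i)⁻¹ * stiffB n K i j * (a j)⁻¹ = (a' i)⁻¹ * stiffB n K' i j * (a' j)⁻¹ := by
    intro i j
    have h := congrFun (congrFun hH i) j
    simpa [assocH, Matrix.mul_diagonal, Matrix.diagonal_mul] using h
  -- diagonal equation
  have hdiag : ∀ i : Fin n,
      (K' i.castSucc + K' i.succ) * (a i)^2 = (K i.castSucc + K i.succ) * (a' i)^2 := by
    intro i
    have h := hEq i i
    have hb : stiffB n K i i = K i.castSucc + K i.succ := by simp [stiffB]
    have hb' : stiffB n K' i i = K' i.castSucc + K' i.succ := by simp [stiffB]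
    rw [hb, hb'] at h
    have h1' := (hap i).ne'
    have h2' := (hap' i).ne'
    field_simp at h
    linear_combination -h
  -- off-diagonal equation
  have hoff : ∀ q (h1 : 0 < q) (h2 : q < n),
      K' ⟨q, by omega⟩ * (a ⟨q-1, by omega⟩ * a ⟨q, h2⟩)
      = K ⟨q, by omega⟩ * (a' ⟨q-1, by omega⟩ * a' ⟨q, h2⟩) := by
    intro q h1 h2
    have h := hEq ⟨q-1, by omega⟩ ⟨q, h2⟩
    have hsucc : (⟨q-1, by omega⟩ : Fin n).succ = (⟨q, by omega⟩ : Fin (n+1)) := by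
      ext; simp; omega
    have hb : stiffB n K ⟨q-1, by omega⟩ ⟨q, h2⟩ = -K ⟨q, by omega⟩ := by
      rw [show stiffB n K ⟨q-1, by omega⟩ ⟨q, h2⟩ =
        (if (q-1 : ℕ) = q then K (⟨q-1, by omega⟩ : Fin n).castSucc + K (⟨q-1, by omega⟩ : Fin n).succ
         else if (q-1 : ℕ) + 1 = q then -K (⟨q-1, by omega⟩ : Fin n).succ
         else if (q : ℕ) + 1 = (q-1:ℕ) then -K (⟨q, h2⟩ : Fin n).succ else 0) from rfl]
      rw [if_neg (by omega), if_pos (by omega), hsucc]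
    have hb' : stiffB n K' ⟨q-1, by omega⟩ ⟨q, h2⟩ = -K' ⟨q, by omega⟩ := by
      rw [show stiffB n K' ⟨q-1, by omega⟩ ⟨q, h2⟩ =
        (if (q-1 : ℕ) = q then K' (⟨q-1, by omega⟩ : Fin n).castSucc + K' (⟨q-1, by omega⟩ : Fin n).succ
         else if (q-1 : ℕ) + 1 = q then -K' (⟨q-1, by omega⟩ : Fin n).succ
         else if (q : ℕ) + 1 = (q-1:ℕ) then -K' (⟨q, h2⟩ : Fin n).succ else 0) from rfl]
      rw [if_neg (by omega), if_pos (by omega), hsucc]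
    rw [hb, hb'] at h
    have h1' := (hap ⟨q-1, by omega⟩).ne'
    have h2' := (hap ⟨q, h2⟩).ne'
    have h3' := (hap' ⟨q-1, by omega⟩).ne'
    have h4' := (hap' ⟨q, h2⟩).ne'
    field_simp at h
    linear_combination h
  -- the ratio sequence
  set t : ℕ → ℝ := fun q => if h : 0 < q ∧ q ≤ n then a' ⟨q-1, by omega⟩ / a ⟨q-1, by omega⟩ else 1 with htdef
  have ht0 : t 0 = 1 := by simp [htdef]
  have htn1 : t (n+1) = 1 := by
    simp only [htdef]
    rw [dif_neg (by omega)]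
  have htq : ∀ q (h : q < n), t (q+1) = a' ⟨q, h⟩ / a ⟨q, h⟩ := by
    intro q h
    simp only [htdef]
    rw [dif_pos ⟨by omega, by omega⟩]
    rfl
  have htq' : ∀ q (h1 : 0 < q) (h2 : q ≤ n),
      t q = a' ⟨q-1, by omega⟩ / a ⟨q-1, by omega⟩ := by
    intro q h1 h2
    simp only [htdef]
    rw [dif_pos ⟨h1, h2⟩]
  have htpos : ∀ q, 0 < t q := by
    intro q
    simp only [htdef]
    split
    · exact div_pos (hap' _) (hap _)
    · norm_num
  -- K' j = t j * t (j+1) * K j for all j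
  have hP : ∀ q (hq : q ≤ n), K' ⟨q, by omega⟩ = t q * t (q+1) * K ⟨q, by omega⟩ := by
    intro q hq
    rcases Nat.eq_zero_or_pos q with rfl | hq0
    · rw [ht0, htq 0 (by omega), one_mul]
      have h0 : (⟨0, by omega⟩ : Fin (n+1)) = 0 := rfl
      rw [h0]
      have hA := hα1
      rw [div_eq_div_iff (Real.sqrt_pos.2 (hm _)).ne' (Real.sqrt_pos.2 (hm' _)).ne'] at hA
      rw [eq_comm, div_mul_eq_mul_div, div_eq_iff (hap ⟨0, by omega⟩).ne']
      simp only [ha, ha']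
      linear_combination hA
    rcases eq_or_lt_of_le hq with hqe | hqn
    · subst hqe
      rw [htn1, mul_one, htq' q (by omega) le_rfl]
      have hL : (⟨q, by omega⟩ : Fin (q+1)) = Fin.last q := rfl
      rw [hL]
      have hA := hβ1
      rw [div_eq_div_iff (Real.sqrt_pos.2 (hm _)).ne' (Real.sqrt_pos.2 (hm' _)).ne'] at hA
      rw [eq_comm, div_mul_eq_mul_div, div_eq_iff (hap ⟨q-1, by omega⟩).ne']
      simp only [ha, ha']
      linear_combination hA
    · rw [htq' q hq0 hq, htq q hqn]
      have hO := hoff q hq0 hqn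
      have h1' := (hap ⟨q-1, by omega⟩).ne'
      have h2' := (hap ⟨q, hqn⟩).ne'
      field_simp
      linear_combination hO
  -- difference recursion
  have hd : ∀ q (h : q < n), K ⟨q, by omega⟩ * (t q - t (q+1))
      = K ⟨q+1, by omega⟩ * (t (q+1) - t (q+1+1)) := by
    intro q h
    have hD := hdiag ⟨q, h⟩
    have hc : (⟨q, h⟩ : Fin n).castSucc = (⟨q, by omega⟩ : Fin (n+1)) := rfl
    have hs : (⟨q, h⟩ : Fin n).succ = (⟨q+1, by omega⟩ : Fin (n+1)) := rfl
    rw [hc, hs, hP q (by omega), hP (q+1) (by omega)] at hD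
    have hA : a' ⟨q, h⟩ = t (q+1) * a ⟨q, h⟩ := by
      rw [htq q h, div_mul_cancel₀ _ (hap ⟨q, h⟩).ne']
    rw [hA] at hD
    have key : t (q+1) * (a ⟨q, h⟩)^2 * (K ⟨q, by omega⟩ * (t q - t (q+1)))
        = t (q+1) * (a ⟨q, h⟩)^2 * (K ⟨q+1, by omega⟩ * (t (q+1) - t (q+1+1))) := by
      linear_combination hD
    exact mul_left_cancel₀ (mul_ne_zero (htpos (q+1)).ne' (pow_ne_zero 2 (hap ⟨q, h⟩).ne')) key
  -- all products equal the first
  have hchain : ∀ q, ∀ _ : q ≤ n, K ⟨q, by omega⟩ * (t q - t (q+1))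
      = K ⟨0, by omega⟩ * (t 0 - t 1) := by
    intro q
    induction q with
    | zero => intro _; rfl
    | succ p ih =>
        intro hq
        rw [← hd p (by omega)]
        exact ih (by omega)
  have hsum : ∑ q ∈ Finset.range (n+1), (t q - t (q+1)) = 0 := by
    rw [Finset.sum_range_sub' t (n+1), ht0, htn1]
    ring
  have hc0 : K ⟨0, by omega⟩ * (t 0 - t 1) = 0 := by
    by_contra hc
    rcases lt_or_gt_of_ne hc with hneg | hpos
    · have hpt : ∀ q ∈ Finset.range (n+1), 0 < t (q+1) - t q := by
        intro q hq
        simp only [Finset.mem_range] at hq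
        have h := hchain q (by omega)
        nlinarith [hK ⟨q, by omega⟩]
      have hp := Finset.sum_pos hpt ⟨0, by simp⟩
      rw [Finset.sum_range_sub t (n+1), ht0, htn1] at hp
      linarith
    · have hpt : ∀ q ∈ Finset.range (n+1), 0 < t q - t (q+1) := by
        intro q hq
        simp only [Finset.mem_range] at hq
        have h := hchain q (by omega)
        nlinarith [hK ⟨q, by omega⟩]
      have hp := Finset.sum_pos hpt ⟨0, by simp⟩
      linarith [hsum]
  have hstep : ∀ q, q ≤ n → t q = t (q+1) := by
    intro q hq
    have h := (hchain q hq).trans hc0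
    have := (mul_eq_zero.1 h).resolve_left (hK ⟨q, by omega⟩).ne'
    linarith
  have hone : ∀ q, q ≤ n + 1 → t q = 1 := by
    intro q
    induction q with
    | zero => intro _; exact ht0
    | succ p ih =>
        intro hq
        rw [← hstep p (by omega)]
        exact ih (by omega)
  constructor
  · funext i
    have h1 := htq i.1 i.isLt
    rw [Fin.eta] at h1
    have h2 := hone (i.1+1) (by omega)
    rw [h1] at h2
    have h3 : a' i = a i := by
      rw [div_eq_one_iff_eq (hap i).ne'] at h2
      exact h2
    exact ((Real.sqrt_inj (hm i).le (hm' i).le).1 h3.symm)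
  · funext j
    have hq := hP j.1 (by omega)
    rw [hone j.1 (by omega), hone (j.1+1) (by omega), one_mul, one_mul] at hq
    simp only [Fin.eta] at hq
    exact hq.symm


/-- Uniqueness: two spring-mass systems with positive masses and positive spring constants
having the same associated matrix `H̃ ∈ T_{A,n}` and the same boundary ratios
`K_1/√(m_1) = α`, `K_{n+1}/√(m_n) = β` coincide. -/
theorem spring_mass_system_unique_of_memTA
    (n : ℕ) (hn : 1 ≤ n) (Ht : Matrix (Fin n) (Fin n) ℝ) (hHt : MemTA Ht)
    (α β : ℝ) (hα : 0 < α) (hβ : 0 < β)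
    (m m' : Fin n → ℝ) (K K' : Fin (n + 1) → ℝ)
    (hm : ∀ i, 0 < m i) (hK : ∀ j, 0 < K j)
    (hm' : ∀ i, 0 < m' i) (hK' : ∀ j, 0 < K' j)
    (hH : assocH n m K = Ht) (hH' : assocH n m' K' = Ht)
    (hα1 : K 0 / Real.sqrt (m ⟨0, by omega⟩) = α)
    (hβ1 : K (Fin.last n) / Real.sqrt (m ⟨n - 1, by omega⟩) = β)
    (hα2 : K' 0 / Real.sqrt (m' ⟨0, by omega⟩) = α)
    (hβ2 : K' (Fin.last n) / Real.sqrt (m' ⟨n - 1, by omega⟩) = β) :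
    m = m' ∧ K = K' := by
  exact spring_mass_aux n hn m m' K K' hm hK hm' hK' (hH.trans hH'.symm)
    (hα1.trans hα2.symm) (hβ1.trans hβ2.symm)
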